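/- Let f : {finite nonempty simple graphs} → ℝ be a function of the form f(G) = Σ_{i=1}^ℓ a_i · t(F_i,G) for finite simple graphs F_1,…,F_ℓ and reals a_1,…,a_ℓ. Then f(G) ≥ 0 for every finite nonempty simple graph G if and only if for every ε > 0 there exists a function h of the same form, h(G) = Σ_{j=1}^m b_j · t(H_j,G), such that h(G) ≥ 0 for every finite nonempty simple graph G and sup_G |f(G) − h(G)²| < ε (the supremum over all finite nonempty simple graphs G). -/
import Mathlib

open Filter Topology

/-- homomorphism density t(F,G) -/
noncomputable def homDensity {W V : Type*} (F : SimpleGraph W) (G : SimpleGraph V) : ℝ :=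
  (Nat.card (F →g G) : ℝ) / (Nat.card V : ℝ) ^ (Nat.card W)

open Polynomial

section GraphLemmas
variable {W V W₁ W₂ : Type*}

instance homFinite [Finite W] [Finite V] (F : SimpleGraph W) (G : SimpleGraph V) :
    Finite (F →g G) :=
  Finite.of_injective (fun f => (f : W → V)) DFunLike.coe_injective

theorem homDensity_nonneg [Finite W] [Finite V] (F : SimpleGraph W) (G : SimpleGraph V) :
    0 ≤ homDensity F G := by
  unfold homDensity
  positivity

theorem homDensity_le_one [Finite W] [Finite V] [Nonempty V]
    (F : SimpleGraph W) (G : SimpleGraph V) : homDensity F G ≤ 1 := by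
  have h1 : Nat.card (F →g G) ≤ Nat.card V ^ Nat.card W := by
    have := Nat.card_le_card_of_injective (α := F →g G) (fun f => (f : W → V))
      DFunLike.coe_injective
    rwa [Nat.card_fun] at this
  have h2 : (0:ℝ) < (Nat.card V : ℝ) ^ Nat.card W := by
    have : 0 < Nat.card V := Nat.card_pos
    positivity
  rw [homDensity, div_le_one h2]
  exact_mod_cast h1

/-- homs out of a disjoint sum -/
def sumHomEquiv (F₁ : SimpleGraph W₁) (F₂ : SimpleGraph W₂) (G : SimpleGraph V) :
    ((F₁ ⊕g F₂) →g G) ≃ (F₁ →g G) × (F₂ →g G) where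
  toFun f := (f.comp SimpleGraph.Embedding.sumInl.toHom, f.comp SimpleGraph.Embedding.sumInr.toHom)
  invFun p := ⟨Sum.elim ⇑p.1 ⇑p.2, by
    rintro (u|u) (v|v) h
    · exact p.1.map_rel h
    · simp at h
    · simp at h
    · exact p.2.map_rel h⟩
  left_inv f := by ext (u|u) <;> rfl
  right_inv p := by ext <;> rfl

theorem homDensity_sum [Finite W₁] [Finite W₂] [Finite V] [Nonempty V]
    (F₁ : SimpleGraph W₁) (F₂ : SimpleGraph W₂) (G : SimpleGraph V) :
    homDensity (F₁ ⊕g F₂) G = homDensity F₁ G * homDensity F₂ G := by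
  have hc : Nat.card ((F₁ ⊕g F₂) →g G) = Nat.card (F₁ →g G) * Nat.card (F₂ →g G) := by
    rw [Nat.card_congr (sumHomEquiv F₁ F₂ G), Nat.card_prod]
  rw [homDensity, homDensity, homDensity, hc, Nat.card_sum, pow_add]
  push_cast
  ring

instance uniqueEmptyHom (G : SimpleGraph V) : Unique ((⊥ : SimpleGraph Empty) →g G) where
  default := ⟨fun x => x.elim, fun {a} => a.elim⟩
  uniq f := DFunLike.ext _ _ fun x => x.elim

theorem homDensity_bot_empty (G : SimpleGraph V) :
    homDensity (⊥ : SimpleGraph Empty) G = 1 := by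
  rw [homDensity, Nat.card_unique, Nat.card_eq_fintype_card (α := Empty)]
  simp

end GraphLemmas

/-- a labelled graph on a finite vertex type -/
structure QG where
  carrier : Type
  fin : Finite carrier
  graph : SimpleGraph carrier

attribute [instance] QG.fin

/-- evaluation of a quantum graph (a formal linear combination of graphs) at `G` -/
noncomputable def qeval (l : List (ℝ × QG)) {V : Type} (G : SimpleGraph V) : ℝ :=
  (l.map fun x => x.1 * homDensity x.2.graph G).sum

section Quantum
variable {V : Type}

theorem qeval_nil (G : SimpleGraph V) : qeval [] G = 0 := rfl

theorem qeval_cons (x : ℝ × QG) (l : List (ℝ × QG)) (G : SimpleGraph V) :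
    qeval (x :: l) G = x.1 * homDensity x.2.graph G + qeval l G := by
  simp [qeval]

theorem qeval_append (l₁ l₂ : List (ℝ × QG)) (G : SimpleGraph V) :
    qeval (l₁ ++ l₂) G = qeval l₁ G + qeval l₂ G := by
  simp [qeval]

def qsmul (c : ℝ) (l : List (ℝ × QG)) : List (ℝ × QG) := l.map fun x => (c * x.1, x.2)

theorem qeval_smul (c : ℝ) (l : List (ℝ × QG)) (G : SimpleGraph V) :
    qeval (qsmul c l) G = c * qeval l G := by
  induction l with
  | nil => simp [qsmul, qeval]
  | cons x l ih => simp [qsmul, qeval_cons] at *; rw [ih]; ring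

def qgMul (x y : QG) : QG := ⟨x.carrier ⊕ y.carrier, by infer_instance, x.graph ⊕g y.graph⟩

def qmul (l₁ l₂ : List (ℝ × QG)) : List (ℝ × QG) :=
  l₁.flatMap fun x => l₂.map fun y => (x.1 * y.1, qgMul x.2 y.2)

variable [Finite V] [Nonempty V]

theorem qeval_single_mul (x : ℝ × QG) (l : List (ℝ × QG)) (G : SimpleGraph V) :
    qeval (l.map fun y => (x.1 * y.1, qgMul x.2 y.2)) G
      = (x.1 * homDensity x.2.graph G) * qeval l G := by
  induction l with
  | nil => simp [qeval]
  | cons y l ih =>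
      rw [List.map_cons, qeval_cons, qeval_cons, ih]
      show x.1 * y.1 * homDensity (x.2.graph ⊕g y.2.graph) G + _ = _
      rw [homDensity_sum]
      ring

theorem qeval_mul (l₁ l₂ : List (ℝ × QG)) (G : SimpleGraph V) :
    qeval (qmul l₁ l₂) G = qeval l₁ G * qeval l₂ G := by
  induction l₁ with
  | nil => simp [qmul, qeval]
  | cons x l ih =>
      rw [qmul, List.flatMap_cons, qeval_append, qeval_single_mul, qeval_cons]
      rw [qmul] at ih
      rw [ih]; ring

def qone : List (ℝ × QG) := [(1, ⟨Empty, by infer_instance, ⊥⟩)]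

theorem qeval_one (G : SimpleGraph V) : qeval qone G = 1 := by
  rw [qone, qeval_cons, qeval_nil, homDensity_bot_empty]; ring

def qpow (l : List (ℝ × QG)) : ℕ → List (ℝ × QG)
  | 0 => qone
  | n + 1 => qmul l (qpow l n)

theorem qeval_pow (l : List (ℝ × QG)) (n : ℕ) (G : SimpleGraph V) :
    qeval (qpow l n) G = (qeval l G) ^ n := by
  induction n with
  | zero => simp [qpow, qeval_one]
  | succ n ih => rw [qpow, qeval_mul, ih, pow_succ]; ring

/-- substitution of a quantum graph into a real polynomial -/
def qpoly (p : ℝ[X]) (l : List (ℝ × QG)) : List (ℝ × QG) :=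
  (List.range (p.natDegree + 1)).flatMap fun n => qsmul (p.coeff n) (qpow l n)

omit [Finite V] [Nonempty V] in
theorem qeval_flatMap {α : Type*} (L : List α) (f : α → List (ℝ × QG)) (G : SimpleGraph V) :
    qeval (L.flatMap f) G = (L.map fun a => qeval (f a) G).sum := by
  induction L with
  | nil => simp [qeval]
  | cons a L ih => rw [List.flatMap_cons, qeval_append, ih, List.map_cons, List.sum_cons]

theorem list_range_sum (n : ℕ) (f : ℕ → ℝ) :
    ((List.range n).map f).sum = ∑ i ∈ Finset.range n, f i := by
  induction n with
  | zero => simp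
  | succ n ih =>
      rw [List.range_succ, Finset.sum_range_succ, List.map_append, List.sum_append, ih]; simp

theorem qeval_poly (p : ℝ[X]) (l : List (ℝ × QG)) (G : SimpleGraph V) :
    qeval (qpoly p l) G = p.eval (qeval l G) := by
  rw [qpoly, qeval_flatMap]
  rw [show ((List.range (p.natDegree + 1)).map fun n => qeval (qsmul (p.coeff n) (qpow l n)) G)
      = ((List.range (p.natDegree + 1)).map fun n => p.coeff n * (qeval l G) ^ n) from
    List.map_congr_left fun n _ => by rw [qeval_smul, qeval_pow]]
  rw [list_range_sum, Polynomial.eval_eq_sum_range]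

end Quantum

theorem fin_sum_list {α : Type*} (l : List α) (f : α → ℝ) :
    ∑ j : Fin l.length, f (l.get j) = (l.map f).sum := by
  induction l with
  | nil => simp
  | cons x l ih =>
      rw [List.map_cons, List.sum_cons, ← ih]
      exact Fin.sum_univ_succ _

/-- any quantum graph (as a list) can be presented in the `Fin m` indexed form -/
theorem qeval_to_finsum (l : List (ℝ × QG)) :
    ∃ (m : ℕ) (X : Fin m → Type) (_ : ∀ j, Finite (X j))
      (H : ∀ j, SimpleGraph (X j)) (b : Fin m → ℝ),
      ∀ (U : Type) (G : SimpleGraph U),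
        (∑ j, b j * homDensity (H j) G) = qeval l G := by
  refine ⟨l.length, fun j => (l.get j).2.carrier, fun j => (l.get j).2.fin,
    fun j => (l.get j).2.graph, fun j => (l.get j).1, fun U G => ?_⟩
  rw [qeval, ← fin_sum_list l (fun x => x.1 * homDensity x.2.graph G)]

/-- a finite linear combination of homomorphism densities is nonnegative on all
finite nonempty simple graphs iff it can be approximated, uniformly within every ε > 0, by
squares of nonnegative finite linear combinations of homomorphism densities. -/
theorem stmt14 (ℓ : ℕ) (W : Fin ℓ → Type) (hW : ∀ i, Finite (W i))
    (F : ∀ i, SimpleGraph (W i)) (a : Fin ℓ → ℝ) :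
    (∀ (U : Type) [Finite U] [Nonempty U] (G : SimpleGraph U),
        0 ≤ ∑ i, a i * homDensity (F i) G) ↔
    (∀ ε : ℝ, 0 < ε →
      ∃ (m : ℕ) (X : Fin m → Type) (_ : ∀ j, Finite (X j))
        (H : ∀ j, SimpleGraph (X j)) (b : Fin m → ℝ),
        (∀ (U : Type) [Finite U] [Nonempty U] (G : SimpleGraph U),
          0 ≤ ∑ j, b j * homDensity (H j) G) ∧
        (∀ (U : Type) [Finite U] [Nonempty U] (G : SimpleGraph U),
          |(∑ i, a i * homDensity (F i) G) - (∑ j, b j * homDensity (H j) G) ^ 2| < ε)) := by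
  constructor
  · -- hard direction
    intro hpos ε hε
    -- the bound M on f
    set M : ℝ := ∑ i, |a i| with hM
    have hM0 : 0 ≤ M := Finset.sum_nonneg fun i _ => abs_nonneg _
    have hsqrtM : 0 ≤ Real.sqrt M := Real.sqrt_nonneg M
    -- choose δ
    set δ : ℝ := min 1 (ε / (4 * Real.sqrt M + 5)) with hδdef
    have hδpos : 0 < δ := by
      apply lt_min one_pos
      positivity
    have hδ1 : δ ≤ 1 := min_le_left _ _
    have hδ2 : δ ≤ ε / (4 * Real.sqrt M + 5) := min_le_right _ _
    -- Weierstrass: approximate sqrt on [0, M]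
    obtain ⟨p, hp⟩ := exists_polynomial_near_of_continuousOn 0 M Real.sqrt
      (Real.continuous_sqrt.continuousOn) δ hδpos
    -- the polynomial q = p + δ
    set q : ℝ[X] := p + Polynomial.C δ with hq
    -- the quantum graph representing f
    set lf : List (ℝ × QG) := (List.finRange ℓ).map fun i => (a i, ⟨W i, hW i, F i⟩) with hlf
    have hlfeval : ∀ (U : Type) (G : SimpleGraph U),
        qeval lf G = ∑ i, a i * homDensity (F i) G := by
      intro U G
      rw [hlf, qeval, List.map_map, Fin.sum_univ_def]
      rfl
    obtain ⟨m, X, hX, H, b, hb⟩ := qeval_to_finsum (qpoly q lf)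
    have main : ∀ (U : Type) [Finite U] [Nonempty U] (G : SimpleGraph U),
        0 ≤ q.eval (∑ i, a i * homDensity (F i) G) ∧
        |(∑ i, a i * homDensity (F i) G) - (q.eval (∑ i, a i * homDensity (F i) G)) ^ 2| < ε := by
      intro U _ _ G
      set x : ℝ := ∑ i, a i * homDensity (F i) G with hx
      have hx0 : 0 ≤ x := hpos U G
      have hxM : x ≤ M := by
        rw [hx, hM]
        apply Finset.sum_le_sum
        intro i _
        calc a i * homDensity (F i) G ≤ |a i * homDensity (F i) G| := le_abs_self _
          _ = |a i| * |homDensity (F i) G| := abs_mul _ _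
          _ = |a i| * homDensity (F i) G := by rw [abs_of_nonneg (homDensity_nonneg _ _)]
          _ ≤ |a i| * 1 :=
              mul_le_mul_of_nonneg_left (homDensity_le_one _ _) (abs_nonneg _)
          _ = |a i| := mul_one _
      have hpx := hp x ⟨hx0, hxM⟩
      have hqx : q.eval x = p.eval x + δ := by simp [hq]
      have hsx0 : 0 ≤ Real.sqrt x := Real.sqrt_nonneg x
      have hsxM : Real.sqrt x ≤ Real.sqrt M := Real.sqrt_le_sqrt hxM
      have habs := abs_lt.mp hpx
      constructor
      · rw [hqx]
        linarith [habs.1]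
      · have hsq : Real.sqrt x ^ 2 = x := Real.sq_sqrt hx0
        have hqlo : Real.sqrt x ≤ q.eval x := by rw [hqx]; linarith [habs.1]
        have hqhi : q.eval x ≤ Real.sqrt x + 2 * δ := by rw [hqx]; linarith [habs.2]
        have hge : x ≤ q.eval x ^ 2 := by nlinarith
        rw [abs_sub_comm, abs_of_nonneg (by linarith)]
        have hδε : (4 * Real.sqrt M + 5) * δ ≤ ε := by
          rw [← le_div_iff₀' (by positivity)]
          exact hδ2
        nlinarith [mul_nonneg (by linarith : (0:ℝ) ≤ Real.sqrt x + 2 * δ - q.eval x)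
            (by linarith : (0:ℝ) ≤ Real.sqrt x + 2 * δ + q.eval x),
          mul_le_mul_of_nonneg_left hsxM (le_of_lt hδpos),
          mul_le_mul_of_nonneg_left hδ1 (le_of_lt hδpos)]
    refine ⟨m, X, hX, H, b, fun U _ _ G => ?_, fun U _ _ G => ?_⟩
    · rw [hb U G, qeval_poly, hlfeval U G]
      exact (main U G).1
    · rw [hb U G, qeval_poly, hlfeval U G]
      exact (main U G).2
  · -- easy direction
    intro happrox U _ _ G
    by_contra hneg
    push_neg at hneg
    obtain ⟨m, X, hX, H, b, hb1, hb2⟩ := happrox (-(∑ i, a i * homDensity (F i) G)) (by linarith)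
    have h2 := hb2 U G
    have h3 := sq_nonneg (∑ j, b j * homDensity (H j) G)
    rw [abs_lt] at h2
    linarith [h2.1]
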